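/- Let $P$ be a compact Poisson manifold with prequantizable symplectic groupoid $\Gamma$, and $E \rightrightarrows P$ the prequantum groupoid. The Lie algebra of the group $U_0(E)$ of Legendrian bisections of $E$ is isomorphic to the Poisson algebra $C^\infty(P)$: explicitly, sections of the Lie algebroid $\tilde{A} = T^*P \oplus (P\times\mathbb{R})$ with bracket $[(\zeta,f),(\eta,g)] = ([\zeta,\eta], (\pi^\#\zeta)g - (\pi^\#\eta)f + \pi(\zeta,\eta))$ of the form $(-df, f)$ constitute a Lie subalgebra, and the map $(-df,f) \mapsto -f$ is a Lie algebra isomorphism onto $(C^\infty(P), \{\cdot,\cdot\})$. -/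

import Mathlib

/-- An abstract model of the Cartan calculus of a Poisson manifold `P`.
Here `F` plays the role of the algebra `C^∞(P)` of smooth functions, `V` of the
`C^∞(P)`-module of vector fields, and `Ω1`, `Ω2` of the spaces of differential
1- and 2-forms.  The fields record the standard operations of differential
calculus (action of vector fields on functions, Lie bracket of vector fields,
exterior derivative, pairing of forms and vector fields, interior product, Lie
derivative via Cartan's magic formula) together with their standard identities,
and the data of a Poisson bivector `π` through its induced bundle map
`sharp = π^♯` (so that `π(ω,θ) = ⟨π^♯ω, θ⟩`), the antisymmetry of `π`, the
Jacobi identity for the Poisson bracket `{f,g} = π(df,dg)`, and the fact that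
`π^♯` intertwines hamiltonian one-forms with hamiltonian vector fields. -/
structure PoissonCalc (F V Ω1 Ω2 : Type*) [CommRing F] [Algebra ℝ F]
    [AddCommGroup V] [Module F V]
    [AddCommGroup Ω1] [Module ℝ Ω1] [Module F Ω1]
    [AddCommGroup Ω2] [Module ℝ Ω2] where
  /-- action of a vector field on a function, `X(f)` -/
  act : V → F → F
  act_add : ∀ X f g, act X (f + g) = act X f + act X g
  act_mul : ∀ X f g, act X (f * g) = f * act X g + g * act X f
  act_addV : ∀ X Y f, act (X + Y) f = act X f + act Y f
  act_smulV : ∀ (f : F) (X : V) (g : F), act (f • X) g = f * act X g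
  /-- Lie bracket of vector fields -/
  lieV : V → V → V
  act_lieV : ∀ X Y f, act (lieV X Y) f = act X (act Y f) - act Y (act X f)
  /-- exterior derivative on functions -/
  d0 : F →ₗ[ℝ] Ω1
  d0_const : ∀ c : ℝ, d0 (algebraMap ℝ F c) = 0
  /-- exterior derivative on one-forms -/
  d1 : Ω1 →ₗ[ℝ] Ω2
  d1_d0 : ∀ f, d1 (d0 f) = 0
  /-- evaluation of a one-form on a vector field, `ω(X)` -/
  pair : V → Ω1 → F
  pair_addV : ∀ X Y ω, pair (X + Y) ω = pair X ω + pair Y ω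
  pair_add : ∀ X ω θ, pair X (ω + θ) = pair X ω + pair X θ
  pair_smulV : ∀ (f : F) (X : V) (ω : Ω1), pair (f • X) ω = f * pair X ω
  pair_smul : ∀ (X : V) (f : F) (ω : Ω1), pair X (f • ω) = f * pair X ω
  pair_d0 : ∀ X f, pair X (d0 f) = act X f
  /-- interior product of a vector field with a two-form -/
  ι2 : V → Ω2 → Ω1
  /-- Lie derivative of one-forms -/
  L : V → Ω1 → Ω1
  /-- Cartan's magic formula `L_X = ι_X d + d ι_X` -/
  cartan : ∀ X ω, L X ω = ι2 X (d1 ω) + d0 (pair X ω)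
  L_lieV : ∀ X Y ω, L (lieV X Y) ω = L X (L Y ω) - L Y (L X ω)
  L_pair : ∀ X Y ω, act X (pair Y ω) = pair Y (L X ω) + pair (lieV X Y) ω
  L_smul : ∀ (X : V) (f : F) (ω : Ω1), L X (f • ω) = f • L X ω + act X f • ω
  /-- one-forms are generated over functions by exact one-forms -/
  span_exact : ∀ ω : Ω1, ω ∈ Submodule.span F (Set.range d0)
  /-- the bundle map `π^♯ : T^*P → TP` induced by the Poisson bivector -/
  sharp : Ω1 → V
  sharp_add : ∀ ω θ, sharp (ω + θ) = sharp ω + sharp θ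
  sharp_smul : ∀ (f : F) (ω : Ω1), sharp (f • ω) = f • sharp ω
  /-- antisymmetry of the Poisson bivector: `π(ω,θ) = -π(θ,ω)` -/
  pair_sharp_skew : ∀ ω θ, pair (sharp ω) θ = - (pair (sharp θ) ω)
  /-- the Jacobi identity for the Poisson bracket `{f,g} = π(df,dg)` -/
  jacobi : ∀ f g h : F,
    pair (sharp (d0 f)) (d0 (pair (sharp (d0 g)) (d0 h))) =
      pair (sharp (d0 (pair (sharp (d0 f)) (d0 g)))) (d0 h) +
      pair (sharp (d0 g)) (d0 (pair (sharp (d0 f)) (d0 h)))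
  /-- `π^♯ d{f,g} = [π^♯ df, π^♯ dg]`, i.e. `X_{{f,g}} = [X_f, X_g]` -/
  sharp_hamiltonian : ∀ f g : F,
    sharp (d0 (pair (sharp (d0 f)) (d0 g))) = lieV (sharp (d0 f)) (sharp (d0 g))

namespace PoissonCalc

variable {F V Ω1 Ω2 : Type*} [CommRing F] [Algebra ℝ F]
    [AddCommGroup V] [Module F V]
    [AddCommGroup Ω1] [Module ℝ Ω1] [Module F Ω1]
    [AddCommGroup Ω2] [Module ℝ Ω2]
variable (C : PoissonCalc F V Ω1 Ω2)

/-- The Poisson bivector evaluated on two one-forms: `π(ω,θ) = ⟨π^♯ω, θ⟩`. -/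
def piv (ω θ : Ω1) : F := C.pair (C.sharp ω) θ

/-- The bracket of one-forms on a Poisson manifold:
`[ω,θ] = L_{X_ω}θ - L_{X_θ}ω - d(π(ω,θ))`, where `X_ω = π^♯ω`. -/
def kbr (ω θ : Ω1) : Ω1 :=
  C.L (C.sharp ω) θ - C.L (C.sharp θ) ω - C.d0 (C.piv ω θ)

end PoissonCalc

namespace PoissonCalc

variable {F V Ω1 Ω2 : Type*} [CommRing F] [Algebra ℝ F]
    [AddCommGroup V] [Module F V]
    [AddCommGroup Ω1] [Module ℝ Ω1] [Module F Ω1]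
    [AddCommGroup Ω2] [Module ℝ Ω2]
variable (C : PoissonCalc F V Ω1 Ω2)

/-- The Poisson bracket `{f,g} = π(df,dg)`. -/
def pbr (f g : F) : F := C.piv (C.d0 f) (C.d0 g)

/-- The bracket on sections of the central extension
`Ã = T^*P ⊕ (P×ℝ)` of the cotangent Lie algebroid by the Poisson tensor
`π` viewed as a Lie algebroid 2-cocycle:
`[(ζ,f),(η,g)] = ([ζ,η], (π^♯ζ)g - (π^♯η)f + π(ζ,η))`. -/
def extBr (p q : Ω1 × F) : Ω1 × F :=
  (C.kbr p.1 q.1,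
    C.act (C.sharp p.1) q.2 - C.act (C.sharp q.1) p.2 + C.piv p.1 q.1)

end PoissonCalc

namespace PoissonCalc

variable {F V Ω1 Ω2 : Type*} [CommRing F] [Algebra ℝ F]
    [AddCommGroup V] [Module F V]
    [AddCommGroup Ω1] [Module ℝ Ω1] [Module F Ω1]
    [AddCommGroup Ω2] [Module ℝ Ω2]
variable (C : PoissonCalc F V Ω1 Ω2)

lemma act_zero' (X : V) : C.act X 0 = 0 := by
  have h := C.act_add X 0 0
  simp only [add_zero] at h
  exact left_eq_add.mp h

lemma act_neg' (X : V) (f : F) : C.act X (-f) = -C.act X f := by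
  have h := C.act_add X f (-f)
  simp only [add_neg_cancel, C.act_zero'] at h
  exact (eq_neg_of_add_eq_zero_right h.symm)

lemma sharp_zero' : C.sharp (0 : Ω1) = 0 := by
  have h := C.sharp_smul 0 0
  simpa using h

lemma sharp_neg' (ω : Ω1) : C.sharp (-ω) = -C.sharp ω := by
  have h := C.sharp_smul (-1 : F) ω
  simpa [neg_one_smul] using h

lemma act_negV' (X : V) (f : F) : C.act (-X) f = -C.act X f := by
  have h := C.act_smulV (-1 : F) X f
  simpa [neg_one_smul] using h

lemma pair_zero' (X : V) : C.pair X (0 : Ω1) = 0 := by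
  have h := C.pair_smul X 0 0
  simpa using h

lemma pair_neg' (X : V) (ω : Ω1) : C.pair X (-ω) = -C.pair X ω := by
  have h := C.pair_smul X (-1 : F) ω
  simpa [neg_one_smul] using h

lemma pair_negV' (X : V) (ω : Ω1) : C.pair (-X) ω = -C.pair X ω := by
  have h := C.pair_smulV (-1 : F) X ω
  simpa [neg_one_smul] using h

lemma L_zero' (X : V) : C.L X (0 : Ω1) = 0 := by
  have h := C.L_smul X 0 0
  simpa using h

lemma iota_zero' (X : V) : C.ι2 X (0 : Ω2) = 0 := by
  have h := C.cartan X 0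
  rw [C.L_zero', C.pair_zero'] at h
  simp only [map_zero, add_zero] at h
  exact h.symm

lemma L_d0' (X : V) (g : F) : C.L X (C.d0 g) = C.d0 (C.act X g) := by
  rw [C.cartan, C.d1_d0, C.iota_zero', C.pair_d0, zero_add]

end PoissonCalc

/-- Let `P` be a compact Poisson manifold with
prequantizable symplectic groupoid `Γ` and prequantum groupoid `E ⇉ P`.
The Lie algebra of the group of Legendrian bisections of `E` is the Poisson
algebra `C^∞(P)`: explicitly, in the Lie algebroid
`Ã = T^*P ⊕ (P×ℝ)` with bracket
`[(ζ,f),(η,g)] = ([ζ,η], (π^♯ζ)g - (π^♯η)f + π(ζ,η))`, the sections of the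
form `(-df, f)` constitute a Lie subalgebra, and the map `(-df,f) ↦ -f` is
a Lie algebra isomorphism onto `(C^∞(P), {·,·})`. -/
theorem legendrian_bisections_lie_algebra
    {F V Ω1 Ω2 : Type*} [CommRing F] [Algebra ℝ F]
    [AddCommGroup V] [Module F V]
    [AddCommGroup Ω1] [Module ℝ Ω1] [Module F Ω1]
    [AddCommGroup Ω2] [Module ℝ Ω2]
    (C : PoissonCalc F V Ω1 Ω2) :
    -- the elements (-df, f) are closed under the bracket of Ã:
    -- [(-df,f),(-dg,g)] = (-dh, h) with h = -{f,g}
    (∀ f g : F,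
      C.extBr (-(C.d0 f), f) (-(C.d0 g), g) =
        (-(C.d0 (-(C.pbr f g))), -(C.pbr f g)))
    -- the map (-df, f) ↦ -f intertwines the bracket of Ã with the Poisson
    -- bracket: the image of [(-df,f),(-dg,g)] is {(-f),(-g)}
    ∧ (∀ f g : F,
        -((C.extBr (-(C.d0 f), f) (-(C.d0 g), g)).2) = C.pbr (-f) (-g))
    -- and f ↦ (-df, f) is a bijection of C^∞(P) onto the subalgebra
    -- {(ζ,f) : ζ = -df}, so (-df,f) ↦ -f is a Lie algebra isomorphism onto
    -- the Poisson algebra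
    ∧ Function.Bijective
        (fun f : F => (⟨(-(C.d0 f), f), rfl⟩ :
          {p : Ω1 × F // p.1 = -(C.d0 p.2)})) := by
  have hL : ∀ a b : F, C.L (C.sharp (-(C.d0 a))) (-(C.d0 b)) =
      C.d0 (C.pair (C.sharp (C.d0 a)) (C.d0 b)) := by
    intro a b
    rw [C.sharp_neg', ← map_neg, C.L_d0', C.act_negV', C.act_neg', neg_neg,
      ← C.pair_d0]
  have hpiv : ∀ a b : F, C.piv (-(C.d0 a)) (-(C.d0 b)) =
      C.pair (C.sharp (C.d0 a)) (C.d0 b) := by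
    intro a b
    simp [PoissonCalc.piv, C.sharp_neg', C.pair_negV', C.pair_neg']
  have key : ∀ f g : F,
      C.extBr (-(C.d0 f), f) (-(C.d0 g), g) =
        (-(C.d0 (-(C.pbr f g))), -(C.pbr f g)) := by
    intro f g
    have hskew : C.pair (C.sharp (C.d0 g)) (C.d0 f) =
        -C.pair (C.sharp (C.d0 f)) (C.d0 g) := C.pair_sharp_skew _ _
    refine Prod.ext ?_ ?_
    · show C.kbr (-(C.d0 f)) (-(C.d0 g)) = -(C.d0 (-(C.pbr f g)))
      show C.L (C.sharp (-(C.d0 f))) (-(C.d0 g)) -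
          C.L (C.sharp (-(C.d0 g))) (-(C.d0 f)) -
          C.d0 (C.piv (-(C.d0 f)) (-(C.d0 g))) = -(C.d0 (-(C.pbr f g)))
      rw [hL, hL, hpiv, hskew]
      show _ = -(C.d0 (-(C.pair (C.sharp (C.d0 f)) (C.d0 g))))
      rw [map_neg]
      abel
    · show C.act (C.sharp (-(C.d0 f))) g - C.act (C.sharp (-(C.d0 g))) f +
          C.piv (-(C.d0 f)) (-(C.d0 g)) = -(C.pbr f g)
      rw [hpiv, C.sharp_neg', C.sharp_neg', C.act_negV', C.act_negV',
        ← C.pair_d0, ← C.pair_d0, hskew]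
      show _ = -(C.pair (C.sharp (C.d0 f)) (C.d0 g))
      abel
  refine ⟨key, ?_, ?_, ?_⟩
  · intro f g
    rw [key f g, neg_neg]
    show C.pbr f g = C.pair (C.sharp (C.d0 (-f))) (C.d0 (-g))
    rw [map_neg, map_neg, C.sharp_neg', C.pair_negV', C.pair_neg', neg_neg]
    rfl
  · intro a b h
    exact congrArg (fun p => p.1.2) h
  · rintro ⟨⟨ζ, f⟩, h⟩
    exact ⟨f, Subtype.ext (Prod.ext (by simpa using h.symm) rfl)⟩
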